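/- Let f_{j+1}, …, f_n be probability generating functions of nonnegative-integer-valued random variables, each with positive finite mean f̄_k = f_k'(1) and finite f_k''(1). Write f_{n,n}(s) = s, f_{j,n} = f_{j+1} ∘ ⋯ ∘ f_n, f̄_{j,m} = ∏_{k=j+1}^{m} f̄_k, and let φ_k be the shape function of f_k. Then for every s ∈ [0,1): 1/(1 − f_{j,n}(s)) = 1/(f̄_{j,n}(1 − s)) + ∑_{k=j+1}^{n} φ_k(f_{k,n}(s)) / f̄_{j,k−1}. -/

import Mathlib

open Filter Finset

structure PGF where
  p : ℕ → ℝ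
  nonneg : ∀ k, 0 ≤ p k
  hasSum_one : HasSum p 1

noncomputable def PGF.eval (f : PGF) (s : ℝ) : ℝ := ∑' k, f.p k * s ^ k

noncomputable def PGF.mean (f : PGF) : ℝ := ∑' k : ℕ, (k : ℝ) * f.p k

noncomputable def PGF.m2 (f : PGF) : ℝ := ∑' k : ℕ, (k : ℝ) * ((k : ℝ) - 1) * f.p k

noncomputable def PGF.m3 (f : PGF) : ℝ := ∑' k : ℕ, (k : ℝ) * ((k : ℝ) - 1) * ((k : ℝ) - 2) * f.p k

noncomputable def shape (f : PGF) (s : ℝ) : ℝ :=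
  if s = 1 then f.m2 / (2 * f.mean ^ 2) else 1 / (1 - f.eval s) - 1 / (f.mean * (1 - s))

/-- `iterComp f j n s` is `f_{j,n}(s) = f_{j+1}(f_{j+2}(⋯ f_n(s)))`, with `f_{n,n}(s) = s`. -/
noncomputable def iterComp (f : ℕ → PGF) (j n : ℕ) (s : ℝ) : ℝ :=
  (List.range' (j+1) (n-j)).foldr (fun k t => (f k).eval t) s

lemma eval_mem_Ico (g : PGF) (hm : 0 < g.mean)
    (hsum : Summable (fun j : ℕ => (j : ℝ) * g.p j))
    {s : ℝ} (hs : s ∈ Set.Ico (0 : ℝ) 1) : g.eval s ∈ Set.Ico (0 : ℝ) 1 := by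
  obtain ⟨hs0, hs1⟩ := hs
  have hsum1 : Summable (fun k : ℕ => g.p k * s ^ k) := by
    apply Summable.of_nonneg_of_le (fun k => mul_nonneg (g.nonneg k) (pow_nonneg hs0 k))
      (fun k => ?_) g.hasSum_one.summable
    calc g.p k * s ^ k ≤ g.p k * 1 := by
          apply mul_le_mul_of_nonneg_left _ (g.nonneg k)
          exact pow_le_one₀ hs0 hs1.le
      _ = g.p k := mul_one _
  constructor
  · exact tsum_nonneg fun k => mul_nonneg (g.nonneg k) (pow_nonneg hs0 k)
  · -- there is some m ≥ 1 with p m > 0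
    obtain ⟨m, hm0⟩ : ∃ m : ℕ, (m : ℝ) * g.p m ≠ 0 := by
      by_contra h
      push_neg at h
      have : g.mean = 0 := by
        simp [PGF.mean, h]
      linarith
    have hm1 : 1 ≤ m := by
      rcases Nat.eq_zero_or_pos m with h | h
      · simp [h] at hm0
      · exact h
    have hpm : 0 < g.p m := lt_of_le_of_ne (g.nonneg m) (by
      intro h; exact hm0 (by rw [← h]; ring))
    have hstrict : g.p m * s ^ m < g.p m := by
      have : s ^ m < 1 := pow_lt_one₀ hs0 hs1 (by omega)
      nlinarith
    have := Summable.tsum_lt_tsum (f := fun k : ℕ => g.p k * s ^ k) (g := g.p)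
      (fun k => by
        calc g.p k * s ^ k ≤ g.p k * 1 :=
              mul_le_mul_of_nonneg_left (pow_le_one₀ hs0 hs1.le) (g.nonneg k)
          _ = g.p k := mul_one _)
      hstrict hsum1 g.hasSum_one.summable
    rwa [g.hasSum_one.tsum_eq] at this

lemma iterComp_succ (f : ℕ → PGF) {j n : ℕ} (h : j < n) (s : ℝ) :
    iterComp f j n s = (f (j+1)).eval (iterComp f (j+1) n s) := by
  unfold iterComp
  have h1 : n - j = (n - (j+1)) + 1 := by omega
  rw [h1, List.range'_succ, List.foldr_cons]

lemma iterComp_mem_Ico (f : ℕ → PGF)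
    (hmean_pos : ∀ k, 0 < (f k).mean)
    (hmean_sum : ∀ k, Summable (fun j : ℕ => (j : ℝ) * (f k).p j))
    (j n : ℕ) {s : ℝ} (hs : s ∈ Set.Ico (0 : ℝ) 1) :
    iterComp f j n s ∈ Set.Ico (0 : ℝ) 1 := by
  rcases le_or_gt n j with h | h
  · have h0 : n - j = 0 := by omega
    simpa [iterComp, h0] using hs
  · obtain ⟨d, hd⟩ : ∃ d, n = j + d := ⟨n - j, by omega⟩
    subst hd
    clear h
    induction d generalizing j with
    | zero => simpa [iterComp] using hs
    | succ d ih =>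
      have h2 : j + (d+1) = (j+1) + d := by omega
      rw [iterComp_succ f (by omega), h2]
      exact eval_mem_Ico _ (hmean_pos _) (hmean_sum _) (ih (j+1))

theorem stmt4 (f : ℕ → PGF) (n : ℕ)
    (hmean_pos : ∀ k, 0 < (f k).mean)
    (hmean_sum : ∀ k, Summable (fun j : ℕ => (j : ℝ) * (f k).p j))
    (hm2_sum : ∀ k, Summable (fun j : ℕ => (j : ℝ) * ((j : ℝ) - 1) * (f k).p j))
    (j : ℕ) (hj : j ≤ n) (s : ℝ) (hs : s ∈ Set.Ico (0 : ℝ) 1) :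
    1 / (1 - iterComp f j n s)
      = 1 / ((∏ k ∈ Finset.Icc (j+1) n, (f k).mean) * (1 - s))
        + ∑ k ∈ Finset.Icc (j+1) n,
            shape (f k) (iterComp f k n s) / ∏ i ∈ Finset.Icc (j+1) (k-1), (f i).mean := by
  obtain ⟨d, rfl⟩ : ∃ d, n = j + d := ⟨n - j, by omega⟩
  clear hj
  induction d generalizing j with
  | zero =>
    simp [iterComp]
  | succ d ih =>
    have hjn : j < j + (d + 1) := by omega
    set n := j + (d + 1) with hn
    have hT : iterComp f (j+1) n s ∈ Set.Ico (0 : ℝ) 1 :=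
      iterComp_mem_Ico f hmean_pos hmean_sum (j+1) n hs
    set T := iterComp f (j+1) n s with hTdef
    have hT1 : T ≠ 1 := ne_of_lt hT.2
    have ha0 : (f (j+1)).mean ≠ 0 := ne_of_gt (hmean_pos _)
    have hshape : shape (f (j+1)) T
        = 1 / (1 - (f (j+1)).eval T) - 1 / ((f (j+1)).mean * (1 - T)) := by
      rw [shape, if_neg hT1]
    have hIH : 1 / (1 - T)
        = 1 / ((∏ k ∈ Finset.Icc (j+2) n, (f k).mean) * (1 - s))
          + ∑ k ∈ Finset.Icc (j+2) n,
              shape (f k) (iterComp f k n s) / ∏ i ∈ Finset.Icc (j+2) (k-1), (f i).mean := by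
      have h2 : (j+1) + d = n := by omega
      have := ih (j+1)
      rw [h2] at this
      rw [show j+1+1 = j+2 from rfl] at this
      exact this
    have hstep : iterComp f j n s = (f (j+1)).eval T := iterComp_succ f hjn s
    have hmem : (j+1) ∉ Finset.Icc (j+2) n := by simp
    have hins : Finset.Icc (j+1) n = insert (j+1) (Finset.Icc (j+2) n) := by
      ext x
      simp only [Finset.mem_Icc, Finset.mem_insert]
      omega
    have hsum_eq : ∑ k ∈ Finset.Icc (j+2) n,
          shape (f k) (iterComp f k n s) / ∏ i ∈ Finset.Icc (j+1) (k-1), (f i).mean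
        = (1/(f (j+1)).mean) * ∑ k ∈ Finset.Icc (j+2) n,
          shape (f k) (iterComp f k n s) / ∏ i ∈ Finset.Icc (j+2) (k-1), (f i).mean := by
      rw [Finset.mul_sum]
      apply Finset.sum_congr rfl
      intro k hk
      simp only [Finset.mem_Icc] at hk
      have hins2 : Finset.Icc (j+1) (k-1) = insert (j+1) (Finset.Icc (j+2) (k-1)) := by
        ext x
        simp only [Finset.mem_Icc, Finset.mem_insert]
        omega
      rw [hins2, Finset.prod_insert (by simp), mul_comm ((f (j+1)).mean), ← div_div,
        div_eq_mul_one_div _ ((f (j+1)).mean), mul_comm]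
    have hkey : 1 / (1 - (f (j+1)).eval T)
        = shape (f (j+1)) T + (1/(f (j+1)).mean) * (1 / (1 - T)) := by
      rw [hshape, one_div_mul_one_div]
      ring
    have hempty : Finset.Icc (j+1) (j+1-1) = (∅ : Finset ℕ) := by
      apply Finset.Icc_eq_empty
      omega
    have hsplit : 1/(((f (j+1)).mean * ∏ k ∈ Finset.Icc (j+2) n, (f k).mean) * (1-s))
        = (1/(f (j+1)).mean) * (1/((∏ k ∈ Finset.Icc (j+2) n, (f k).mean) * (1-s))) := by
      rw [one_div_mul_one_div, mul_assoc]
    rw [hstep, hkey, hIH, hins, Finset.sum_insert hmem, Finset.prod_insert hmem,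
      hempty, hsum_eq, ← hTdef, hsplit]
    simp only [Finset.prod_empty, div_one]
    ring
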